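/- Along any trajectory of the shifted synchronous machine model (differentiable δ̃, ω̃, ĩ_d, ĩ_q : ℝ → ℝ with δ̃'(t) = ω̃(t), J·ω̃'(t) = −D·ω̃(t) − b·ĩ_q(t), L·ĩ_d'(t) = −R·ĩ_d(t) − L·ω̃(t)·ĩ_q(t) − L·ω̃(t)·i_q^s − L·ω_s·ĩ_q(t) − R_L·I·sΔ(t), L·ĩ_q'(t) = −R·ĩ_q(t) + L·ω̃(t)·ĩ_d(t) + L·ω̃(t)·i_d^s + L·ω_s·ĩ_d(t) + b·ω̃(t) − R_L·I·cΔ(t), where sΔ(t) = sin(δ̃(t) + δ_s) − sin(δ_s) and cΔ(t) = cos(δ̃(t) + δ_s) − cos(δ_s)), the storage function V(t) = (1/2)·J·ω̃(t)² + (1/2)·L·ĩ_d(t)² + (1/2)·L·ĩ_q(t)² satisfies the exact identity: V'(t) = −D·ω̃(t)² − R·(ĩ_d(t)² + ĩ_q(t)²) + L·ω̃(t)·(ĩ_q(t)·i_d^s − ĩ_d(t)·i_q^s) − R_L·I·(ĩ_d(t)·sΔ(t) + ĩ_q(t)·cΔ(t)). -/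

import Mathlib

open Real

/-- Exact storage-rate identity for the shifted synchronous machine model:
`V' = −D ω̃² − R (ĩ_d² + ĩ_q²) + L ω̃ (ĩ_q i_d^s − ĩ_d i_q^s) − R_L I (ĩ_d sΔ + ĩ_q cΔ)`. -/
theorem shifted_sm_energy_identity
    (J L D R_s R_l R_L b I ω_s δ_s i_ds i_qs R : ℝ)
    (hJ : 0 < J) (hL : 0 < L)
    (hR : R = R_s + R_l + R_L)
    (δ ω i_d i_q δ' ω' i_d' i_q' : ℝ → ℝ)
    (sΔ cΔ : ℝ → ℝ)
    (hsΔ : ∀ t, sΔ t = Real.sin (δ t + δ_s) - Real.sin δ_s)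
    (hcΔ : ∀ t, cΔ t = Real.cos (δ t + δ_s) - Real.cos δ_s)
    (hδ : ∀ t, HasDerivAt δ (δ' t) t)
    (hω : ∀ t, HasDerivAt ω (ω' t) t)
    (hid : ∀ t, HasDerivAt i_d (i_d' t) t)
    (hiq : ∀ t, HasDerivAt i_q (i_q' t) t)
    (heq1 : ∀ t, δ' t = ω t)
    (heq2 : ∀ t, J * ω' t = -D * ω t - b * i_q t)
    (heq3 : ∀ t, L * i_d' t = -R * i_d t - L * ω t * i_q t - L * ω t * i_qs
        - L * ω_s * i_q t - R_L * I * sΔ t)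
    (heq4 : ∀ t, L * i_q' t = -R * i_q t + L * ω t * i_d t + L * ω t * i_ds
        + L * ω_s * i_d t + b * ω t - R_L * I * cΔ t) :
    ∀ t, deriv (fun s => (1/2) * J * ω s ^ 2 + (1/2) * L * i_d s ^ 2
            + (1/2) * L * i_q s ^ 2) t
      = -D * ω t ^ 2 - R * (i_d t ^ 2 + i_q t ^ 2)
        + L * ω t * (i_q t * i_ds - i_d t * i_qs)
        - R_L * I * (i_d t * sΔ t + i_q t * cΔ t) := by
  intro t
  have h : HasDerivAt (fun s => (1/2) * J * ω s ^ 2 + (1/2) * L * i_d s ^ 2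
      + (1/2) * L * i_q s ^ 2)
      (J * ω t * ω' t + L * i_d t * i_d' t + L * i_q t * i_q' t) t := by
    have := (((hω t).pow 2).const_mul ((1:ℝ)/2 * J)).add
      ((((hid t).pow 2).const_mul ((1:ℝ)/2 * L)).add
        (((hiq t).pow 2).const_mul ((1:ℝ)/2 * L)))
    convert this using 1
    · rfl
    · rfl
    · ext s; simp only [Pi.add_apply, Pi.pow_apply]; ring
    · norm_num; ring
  rw [h.deriv]
  linear_combination ω t * heq2 t + i_d t * heq3 t + i_q t * heq4 t
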